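/- In the Smith–Fraenkel–Perl theory of cyclic impartial games, a position G is a Draw (both players can avoid losing but neither can win) if and only if its Grundy value is ∞_D with 0 ∉ D. -/
import Mathlib


/-- The minimum excluded value of a set of nonnegative integers. -/
noncomputable def mex (S : Set ℕ) : ℕ := sInf {n | n ∉ S}

/-- A cyclic impartial game board: a finite digraph, possibly with cycles.
`adj x y` means `(V, y)` is an option of `(V, x)`. -/
structure CycGame where
  V : Type
  finite : Finite V
  adj : V → V → Prop

namespace CycGame

open Classical in
/-- One step of the Smith–Fraenkel–Perl labeling algorithm (Algorithm 2):
an unassigned node `x` receives the value `m = mex` of the assigned values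
of its options, provided every option that is unassigned or assigned a
value greater than `m` reverts, i.e. has an option assigned `m`.  Here
`none` plays the role of the symbol `∞`. -/
noncomputable def step (G : CycGame) (g : G.V → Option ℕ) : G.V → Option ℕ :=
  fun x =>
    match g x with
    | some m => some m
    | none =>
      let m := mex {k | ∃ y, G.adj x y ∧ g y = some k}
      if ∀ y, G.adj x y → (∀ k, g y = some k → m < k) →
          ∃ z, G.adj y z ∧ g z = some m then
        some m
      else none

/-- The Smith–Fraenkel–Perl Grundy labeling: iterate the algorithm (from the
all-`∞` initialization) until it stabilizes; `Nat.card G.V + 1` steps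
suffice.  `smith G x = some m` means `(V, x)` has finite Grundy value `m`;
`smith G x = none` means `x` lies in a cyclic zone (value `∞_D`). -/
noncomputable def smith (G : CycGame) : G.V → Option ℕ :=
  (G.step)^[Nat.card G.V + 1] fun _ => none

/-- The exit set `D` of a node: the finite Grundy values of its options.
For a node in a cyclic zone this is the subscript in `∞_D`. -/
def exits (G : CycGame) (x : G.V) : Set ℕ :=
  {a | ∃ y, G.adj x y ∧ G.smith y = some a}

/-- `x` is an N-position: the next player can force a win, i.e. there is a
move to a position all of whose options are N-positions (a P-position). -/
inductive NPos (G : CycGame) : G.V → Prop where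
  | intro (x y : G.V) (h : G.adj x y) (hy : ∀ z, G.adj y z → NPos G z) :
      NPos G x

/-- `x` is a P-position: it is terminal or all of its options are
N-positions. -/
def PPos (G : CycGame) (x : G.V) : Prop := ∀ y, G.adj x y → G.NPos y

/-- `x` is a Draw: neither player can force a win (the game is tied by
infinite play). -/
def Draw (G : CycGame) (x : G.V) : Prop := ¬ G.NPos x ∧ ¬ G.PPos x

/-- The disjunctive sum of two cyclic impartial games: a move is a move in
exactly one component. -/
def sum (G H : CycGame) : CycGame where
  V := G.V × H.V
  finite := by have := G.finite; have := H.finite; exact inferInstance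
  adj := fun p q =>
    (G.adj p.1 q.1 ∧ p.2 = q.2) ∨ (H.adj p.2 q.2 ∧ p.1 = q.1)

end CycGame

namespace CycGame

variable (G : CycGame)

lemma step_of_some {g : G.V → Option ℕ} {x : G.V} {m : ℕ} (h : g x = some m) :
    G.step g x = some m := by
  simp [step, h]

lemma values_finite (g : G.V → Option ℕ) (x : G.V) :
    Set.Finite {k | ∃ y, G.adj x y ∧ g y = some k} := by
  have := G.finite
  have hsub : {k | ∃ y, G.adj x y ∧ g y = some k} ⊆ ⋃ y : G.V, {k | g y = some k} := by
    rintro k ⟨y, -, hy⟩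
    exact Set.mem_iUnion.mpr ⟨y, hy⟩
  refine Set.Finite.subset (Set.finite_iUnion fun y => ?_) hsub
  refine Set.Subsingleton.finite ?_
  intro a ha b hb
  simp only [Set.mem_setOf_eq] at ha hb
  rw [ha] at hb
  exact Option.some_injective _ hb

lemma zero_not_mem_of_mex_zero {S : Set ℕ} (hS : S.Finite) (h : mex S = 0) : 0 ∉ S := by
  intro h0
  have hne : {n | n ∉ S}.Nonempty := by
    have : Set.Infinite {n | n ∉ S} := by
      have := hS.infinite_compl
      simpa [Set.compl_def] using this
    exact this.nonempty
  have := Nat.sInf_mem hne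
  rw [show sInf {n | n ∉ S} = mex S from rfl, h] at this
  exact this h0

lemma mem_of_lt_mex {S : Set ℕ} {k : ℕ} (h : k < mex S) : k ∈ S := by
  by_contra hk
  exact absurd (Nat.sInf_le hk) (not_le.mpr h)

lemma not_PPos_of_NPos {x : G.V} (h : G.NPos x) : ¬ G.PPos x := by
  induction h with
  | intro x y hxy hy ih =>
    intro hP
    obtain ⟨_, z, hyz, hz⟩ := hP y hxy
    exact ih z hyz hz

lemma key : ∀ n (x : G.V) (m : ℕ), (G.step)^[n] (fun _ => none) x = some m →
    (m = 0 → G.PPos x) ∧ (m ≠ 0 → G.NPos x) := by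
  intro n
  induction n with
  | zero => intro x m h; simp at h
  | succ n ih =>
    intro x m h
    rw [Function.iterate_succ_apply'] at h
    set g := (G.step)^[n] (fun _ => none) with hg
    rcases hx : g x with _ | m'
    · simp only [step, hx] at h
      set S := {k | ∃ y, G.adj x y ∧ g y = some k} with hS
      split at h
      case isTrue hC =>
        have hm : m = mex S := (Option.some_injective _ h).symm
        constructor
        · intro hm0
          intro y hxy
          rcases hy : g y with _ | k
          · obtain ⟨z, hyz, hz⟩ := hC y hxy (by intro k hk; rw [hy] at hk; cases hk)
            rw [← hm, hm0] at hz
            exact NPos.intro y z hyz ((ih z 0 hz).1 rfl)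
          · have hk0 : k ≠ 0 := by
              intro h0
              subst h0
              have h0S : (0 : ℕ) ∈ S := ⟨y, hxy, hy⟩
              exact zero_not_mem_of_mex_zero (G.values_finite g x) (hm ▸ hm0) h0S
            exact (ih y k hy).2 hk0
        · intro hmne
          have h0S : (0 : ℕ) ∈ S := mem_of_lt_mex (by omega)
          obtain ⟨y, hxy, hy⟩ := h0S
          exact NPos.intro x y hxy ((ih y 0 hy).1 rfl)
      case isFalse => cases h
    · simp only [step, hx] at h
      cases h
      exact ih x m hx

lemma smith_key {x : G.V} {m : ℕ} (h : G.smith x = some m) :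
    (m = 0 → G.PPos x) ∧ (m ≠ 0 → G.NPos x) :=
  G.key (Nat.card G.V + 1) x m h

lemma stabilize : G.step G.smith = G.smith := by
  classical
  have := G.finite
  set a : ℕ → (G.V → Option ℕ) := fun n => (G.step)^[n] (fun _ => none) with ha
  have hsucc : ∀ n, a (n + 1) = G.step (a n) := by
    intro n
    simp only [ha, Function.iterate_succ_apply']
  have hprop : ∀ n, a (n + 1) = a n → ∀ k, a (n + k) = a n := by
    intro n h k
    induction k with
    | zero => rfl
    | succ k ihk =>
      have : a (n + k + 1) = G.step (a (n + k)) := hsucc _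
      rw [show n + (k + 1) = n + k + 1 from rfl, this, ihk, ← hsucc, h]
  by_contra hne
  have hne' : a (Nat.card G.V + 2) ≠ a (Nat.card G.V + 1) := by
    rw [hsucc]
    exact fun h => hne h
  have hall : ∀ n ≤ Nat.card G.V + 1, a (n + 1) ≠ a n := by
    intro n hn h
    apply hne'
    have h1 := hprop n h (Nat.card G.V + 2 - n)
    have h2 := hprop n h (Nat.card G.V + 1 - n)
    rw [show n + (Nat.card G.V + 2 - n) = Nat.card G.V + 2 by omega] at h1
    rw [show n + (Nat.card G.V + 1 - n) = Nat.card G.V + 1 by omega] at h2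
    rw [h1, h2]
  have hcard : ∀ n ≤ Nat.card G.V + 2, n ≤ {x | a n x ≠ none}.ncard := by
    intro n
    induction n with
    | zero => intro _; simp
    | succ n ihn =>
      intro hn
      have hsub : {x | a n x ≠ none} ⊂ {x | a (n + 1) x ≠ none} := by
        constructor
        · intro x hx
          rcases hax : a n x with _ | m
          · exact absurd hax hx
          · have : a (n + 1) x = some m := by rw [hsucc]; exact G.step_of_some hax
            simp [this]
        · intro hsub'
          have hne'' := hall n (by omega)
          apply hne''
          funext x
          rcases hax : a n x with _ | m
          · by_contra h'
            exact (hsub' h') hax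
          · rw [hsucc, G.step_of_some hax]
      have hlt := Set.ncard_lt_ncard hsub (Set.toFinite _)
      have := ihn (by omega)
      omega
  have h1 := hcard (Nat.card G.V + 2) le_rfl
  have h2 : {x | a (Nat.card G.V + 2) x ≠ none}.ncard ≤ Nat.card G.V := by
    calc {x | a (Nat.card G.V + 2) x ≠ none}.ncard
        ≤ (Set.univ : Set G.V).ncard :=
          Set.ncard_le_ncard (Set.subset_univ _) (Set.toFinite _)
      _ = Nat.card G.V := Set.ncard_univ _
  omega

lemma smith_zero_of {x : G.V} (h : ∀ y, G.adj x y → (0 : ℕ) ∈ G.exits y) :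
    G.smith x = some 0 := by
  have h0 : (0 : ℕ) ∉ G.exits x := by
    rintro ⟨y, hxy, hy0⟩
    have hP : G.PPos y := (G.smith_key hy0).1 rfl
    obtain ⟨z, hyz, hz⟩ := h y hxy
    have hPz : G.PPos z := (G.smith_key hz).1 rfl
    exact G.not_PPos_of_NPos (NPos.intro y z hyz hPz) hP
  have hEq : G.exits x = {k | ∃ y, G.adj x y ∧ G.smith y = some k} := rfl
  have hmex : mex {k | ∃ y, G.adj x y ∧ G.smith y = some k} = 0 := by
    rw [← hEq]
    exact Nat.sInf_eq_zero.mpr (Or.inl h0)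
  rcases hx : G.smith x with _ | m
  · exfalso
    have hstep : G.step G.smith x = none := by rw [G.stabilize, hx]
    simp only [step, hx, hmex] at hstep
    split at hstep
    case isTrue => cases hstep
    case isFalse hC =>
      apply hC
      intro y hxy _
      obtain ⟨z, hyz, hz⟩ := h y hxy
      rw [hmex]
      exact ⟨z, hyz, hz⟩
  · by_contra hcon
    have hm0 : m ≠ 0 := fun h' => hcon (by rw [h'])
    have hN : G.NPos x := (G.smith_key hx).2 hm0
    have hP : G.PPos x := by
      intro y hxy
      obtain ⟨z, hyz, hz⟩ := h y hxy
      exact NPos.intro y z hyz ((G.smith_key hz).1 rfl)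
    exact G.not_PPos_of_NPos hN hP

lemma zero_mem_exits_of_NPos {x : G.V} (h : G.NPos x) : (0 : ℕ) ∈ G.exits x := by
  induction h with
  | intro x y hxy hy ih =>
    exact ⟨y, hxy, G.smith_zero_of fun z hz => ih z hz⟩

end CycGame

/-- In the Smith–Fraenkel–Perl theory, a cyclic impartial game position is a
Draw if and only if its Grundy value is `∞_D` with `0 ∉ D`, i.e. it lies in
a cyclic zone and no option has Grundy value `0`. -/
theorem draw_iff_cyclic_no_zero_exit (G : CycGame) (x : G.V) :
    G.Draw x ↔ G.smith x = none ∧ 0 ∉ G.exits x := by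
  constructor
  · rintro ⟨hN, hP⟩
    constructor
    · rcases hx : G.smith x with _ | m
      · rfl
      · exfalso
        by_cases hm : m = 0
        · exact hP ((G.smith_key hx).1 hm)
        · exact hN ((G.smith_key hx).2 hm)
    · rintro ⟨y, hxy, hy⟩
      exact hN (CycGame.NPos.intro x y hxy ((G.smith_key hy).1 rfl))
  · rintro ⟨hnone, h0⟩
    constructor
    · intro hN
      exact h0 (G.zero_mem_exits_of_NPos hN)
    · intro hP
      have : G.smith x = some 0 :=
        G.smith_zero_of fun y hxy => G.zero_mem_exits_of_NPos (hP y hxy)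
      rw [hnone] at this
      cases this
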